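/- Let X be an infinite dimensional separable complex Banach space, T a quasinilpotent bounded linear operator on X, and p a complex polynomial of degree n = deg(p) ≥ 2 such that the derivative p′ has a non-zero root of multiplicity n − 1. Then T has a nontrivial closed invariant subspace if and only if p(T) has a nontrivial closed invariant subspace. -/

import Mathlib

open Polynomial

/-- `T` has a nontrivial closed invariant subspace. -/
def HasNontrivialClosedInvariantSubspace {E : Type*} [NormedAddCommGroup E]
    [NormedSpace ℂ E] (T : E →L[ℂ] E) : Prop :=
  ∃ M : Submodule ℂ E, IsClosed (M : Set E) ∧ M ≠ ⊥ ∧ M ≠ ⊤ ∧ ∀ x ∈ M, T x ∈ M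

namespace StmtAux

open Filter Finset

variable {A : Type*} [NormedRing A] [NormedAlgebra ℂ A] [CompleteSpace A]

/-- Quasinilpotency expressed via norm growth. -/
def IsQN (q : A) : Prop := ∀ ε : ℝ, 0 < ε → ∀ᶠ k in atTop, ‖q ^ k‖ ≤ ε ^ k

theorem IsQN.bound {q : A} (h : IsQN q) {ε : ℝ} (hε : 0 < ε) :
    ∃ C : ℝ, 1 ≤ C ∧ ∀ k, ‖q ^ k‖ ≤ C * ε ^ k := by
  obtain ⟨K, hK⟩ := Filter.eventually_atTop.mp (h ε hε)
  have hsum0 : (0:ℝ) ≤ ∑ j ∈ Finset.range K, ‖q ^ j‖ / ε ^ j :=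
    Finset.sum_nonneg fun j _ => by positivity
  refine ⟨(∑ j ∈ Finset.range K, ‖q ^ j‖ / ε ^ j) + 1, by linarith, fun k => ?_⟩
  rcases lt_or_ge k K with hk | hk
  · have h1 : ‖q ^ k‖ / ε ^ k ≤ ∑ j ∈ Finset.range K, ‖q ^ j‖ / ε ^ j :=
      Finset.single_le_sum (f := fun j => ‖q ^ j‖ / ε ^ j) (fun j _ => by positivity)
        (Finset.mem_range.mpr hk)
    have h2 : (0:ℝ) < ε ^ k := pow_pos hε k
    rw [div_le_iff₀ h2] at h1
    nlinarith
  · have h1 := hK k hk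
    have h2 : (0:ℝ) ≤ ε ^ k := (pow_pos hε k).le
    nlinarith

theorem IsQN.smul {q : A} (h : IsQN q) (c : ℂ) : IsQN (c • q) := by
  intro ε hε
  have hc : (0:ℝ) < ‖c‖ + 1 := by positivity
  filter_upwards [h (ε / (‖c‖ + 1)) (by positivity)] with k hk
  rw [_root_.smul_pow, norm_smul]
  have h1 : ‖c ^ k‖ ≤ (‖c‖ + 1) ^ k := by
    rw [norm_pow]
    exact pow_le_pow_left₀ (norm_nonneg c) (by linarith) k
  calc ‖c ^ k‖ * ‖q ^ k‖ ≤ (‖c‖ + 1) ^ k * (ε / (‖c‖ + 1)) ^ k := by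
        exact mul_le_mul h1 hk (norm_nonneg _) (by positivity)
    _ = ε ^ k := by
        rw [← mul_pow, mul_div_cancel₀ _ (ne_of_gt hc)]

theorem IsQN.neg {q : A} (h : IsQN q) : IsQN (-q) := by
  have := h.smul (-1 : ℂ)
  simpa using this

theorem IsQN.mul_commute {q : A} (h : IsQN q) {z : A} (hc : Commute q z) : IsQN (q * z) := by
  intro ε hε
  have hz : (0:ℝ) < ‖z‖ + 1 := by positivity
  filter_upwards [h (ε / (‖z‖ + 1)) (by positivity), eventually_ge_atTop 1] with k hk hk1
  rw [hc.mul_pow]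
  have h1 : ‖z ^ k‖ ≤ (‖z‖ + 1) ^ k :=
    (norm_pow_le' z hk1).trans (pow_le_pow_left₀ (norm_nonneg z) (by linarith) k)
  calc ‖q ^ k * z ^ k‖ ≤ ‖q ^ k‖ * ‖z ^ k‖ := norm_mul_le _ _
    _ ≤ (ε / (‖z‖ + 1)) ^ k * (‖z‖ + 1) ^ k :=
        mul_le_mul hk h1 (norm_nonneg _) (by positivity)
    _ = ε ^ k := by rw [← mul_pow, div_mul_cancel₀ _ (ne_of_gt hz)]

theorem IsQN.add {x y : A} (hx : IsQN x) (hy : IsQN y) (hc : Commute x y) : IsQN (x + y) := by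
  intro ε hε
  obtain ⟨C, hC1, hC⟩ := hx.bound (show (0:ℝ) < ε/4 by linarith)
  obtain ⟨D, hD1, hD⟩ := hy.bound (show (0:ℝ) < ε/4 by linarith)
  have hone : (0:ℝ) < ‖(1:A)‖ + 1 := by positivity
  have h2 : Tendsto (fun k : ℕ => (2:ℝ) ^ k) atTop atTop :=
    tendsto_pow_atTop_atTop_of_one_lt one_lt_two
  filter_upwards [h2.eventually_ge_atTop (C * D * (‖(1:A)‖ + 1))] with k hk
  rw [hc.add_pow]
  have hbound : ∀ m ∈ Finset.range (k+1),
      ‖x ^ m * y ^ (k - m) * ((k.choose m : ℕ) : A)‖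
        ≤ (C * D * (‖(1:A)‖ + 1)) * ((k.choose m : ℝ) * (ε/4) ^ k) := by
    intro m hm
    have hmk : m ≤ k := Nat.lt_succ_iff.mp (Finset.mem_range.mp hm)
    have e1 : ‖x ^ m * y ^ (k - m) * ((k.choose m : ℕ) : A)‖
        ≤ ‖x ^ m‖ * ‖y ^ (k - m)‖ * ‖((k.choose m : ℕ) : A)‖ :=
      (norm_mul_le _ _).trans (by gcongr; exact norm_mul_le _ _)
    have e2 : ‖((k.choose m : ℕ) : A)‖ ≤ (k.choose m : ℝ) * (‖(1:A)‖ + 1) :=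
      (Nat.norm_cast_le _).trans (by
        have : (0:ℝ) ≤ (k.choose m : ℝ) := Nat.cast_nonneg _
        nlinarith [norm_nonneg (1:A)])
    have e3 : ‖x ^ m‖ * ‖y ^ (k - m)‖ ≤ (C * (ε/4) ^ m) * (D * (ε/4) ^ (k - m)) :=
      mul_le_mul (hC m) (hD (k - m)) (norm_nonneg _) (by positivity)
    have e4 : (ε/4 : ℝ) ^ m * (ε/4) ^ (k - m) = (ε/4) ^ k := by
      rw [← pow_add, Nat.add_sub_cancel' hmk]
    calc ‖x ^ m * y ^ (k - m) * ((k.choose m : ℕ) : A)‖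
        ≤ (‖x ^ m‖ * ‖y ^ (k - m)‖) * ‖((k.choose m : ℕ) : A)‖ := e1
      _ ≤ ((C * (ε/4) ^ m) * (D * (ε/4) ^ (k - m))) * ((k.choose m : ℝ) * (‖(1:A)‖ + 1)) := by
          apply mul_le_mul e3 e2 (norm_nonneg _) (by positivity)
      _ = (C * D * (‖(1:A)‖ + 1)) * ((k.choose m : ℝ) * ((ε/4) ^ m * (ε/4) ^ (k - m))) := by ring
      _ = (C * D * (‖(1:A)‖ + 1)) * ((k.choose m : ℝ) * (ε/4) ^ k) := by rw [e4]
  calc ‖∑ m ∈ Finset.range (k+1), x ^ m * y ^ (k - m) * ((k.choose m : ℕ) : A)‖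
      ≤ ∑ m ∈ Finset.range (k+1), ‖x ^ m * y ^ (k - m) * ((k.choose m : ℕ) : A)‖ :=
        norm_sum_le _ _
    _ ≤ ∑ m ∈ Finset.range (k+1), (C * D * (‖(1:A)‖ + 1)) * ((k.choose m : ℝ) * (ε/4) ^ k) :=
        Finset.sum_le_sum hbound
    _ = (C * D * (‖(1:A)‖ + 1)) * (ε/4) ^ k * ∑ m ∈ Finset.range (k+1), (k.choose m : ℝ) := by
        rw [Finset.mul_sum]; congr 1; ext m; ring
    _ = (C * D * (‖(1:A)‖ + 1)) * (ε/4) ^ k * (2 : ℝ) ^ k := by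
        congr 1
        rw [← Nat.cast_sum]
        rw [Nat.sum_range_choose]
        push_cast; ring
    _ ≤ (2:ℝ) ^ k * (ε/4) ^ k * (2:ℝ) ^ k := by
        have hp : (0:ℝ) ≤ (ε/4) ^ k := by positivity
        have h2k : (0:ℝ) ≤ (2:ℝ) ^ k := by positivity
        have := mul_le_mul_of_nonneg_right (mul_le_mul_of_nonneg_right hk hp) h2k
        linarith
    _ = ε ^ k := by rw [← mul_pow, ← mul_pow]; congr 1; ring

theorem IsQN.summable_norm_smul {q : A} (h : IsQN q) {f : ℕ → ℂ} {C r : ℝ} (hC : 0 ≤ C)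
    (hr : 0 ≤ r) (hf : ∀ k, ‖f k‖ ≤ C * r ^ k) :
    Summable (fun k => ‖f k • q ^ k‖) := by
  obtain ⟨D, hD1, hD⟩ := h.bound (show (0:ℝ) < (2*(r+1))⁻¹ by positivity)
  have key : ∀ k, ‖f k • q ^ k‖ ≤ (C * D) * (1/2 : ℝ) ^ k := by
    intro k
    rw [norm_smul]
    have e1 : ‖f k‖ * ‖q ^ k‖ ≤ (C * r ^ k) * (D * ((2*(r+1))⁻¹) ^ k) :=
      mul_le_mul (hf k) (hD k) (norm_nonneg _) (by positivity)
    have e2 : (r : ℝ) * (2*(r+1))⁻¹ ≤ 1/2 := by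
      rw [inv_eq_one_div, ← mul_div_assoc, div_le_div_iff₀ (by positivity) (by norm_num)]
      nlinarith
    calc ‖f k‖ * ‖q ^ k‖ ≤ (C * D) * ((r * (2*(r+1))⁻¹) ^ k) := by
          rw [mul_pow]; nlinarith [e1]
      _ ≤ (C * D) * (1/2:ℝ) ^ k := by
          have : (r * (2*(r+1))⁻¹) ^ k ≤ (1/2:ℝ) ^ k :=
            pow_le_pow_left₀ (by positivity) e2 k
          have hCD : (0:ℝ) ≤ C * D := by nlinarith
          nlinarith
  exact Summable.of_nonneg_of_le (fun k => norm_nonneg _) key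
    (((summable_geometric_of_lt_one (by norm_num) (by norm_num))).mul_left _)

theorem IsQN.summable_smul {q : A} (h : IsQN q) {f : ℕ → ℂ} {C r : ℝ} (hC : 0 ≤ C)
    (hr : 0 ≤ r) (hf : ∀ k, ‖f k‖ ≤ C * r ^ k) :
    Summable (fun k => f k • q ^ k) :=
  (h.summable_norm_smul hC hr hf).of_norm

theorem IsQN.isUnit_one_add {x : A} (h : IsQN x) : IsUnit (1 + x) := by
  have hsn : Summable (fun k => ‖(1:ℂ) • (-x) ^ k‖) :=
    h.neg.summable_norm_smul (C := 1) (r := 1) zero_le_one zero_le_one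
      (fun k => by simp)
  have hs : Summable (fun k => (-x) ^ k) := by
    have := hsn.of_norm
    simpa using this
  set N : A := ∑' k, (-x) ^ k with hN
  have hs' : Summable (fun k => (-x) ^ (k+1)) := by
    exact_mod_cast (summable_nat_add_iff 1).mpr hs
  have hsplit : N = 1 + ∑' k, (-x) ^ (k+1) := by
    rw [hN, Summable.tsum_eq_zero_add hs, pow_zero]
  have hxN : x * N = 1 - N := by
    have h1 : x * N = ∑' k, x * (-x) ^ k := (hs.tsum_mul_left x).symm
    have h2 : ∀ k, x * (-x) ^ k = -((-x) ^ (k+1)) := by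
      intro k
      rw [pow_succ']
      simp
    rw [h1]
    calc (∑' k, x * (-x) ^ k) = ∑' k, -((-x) ^ (k+1)) := tsum_congr h2
      _ = -(∑' k, (-x) ^ (k+1)) := tsum_neg
      _ = 1 - N := by rw [hsplit]; abel
  have hNx : N * x = 1 - N := by
    have h1 : N * x = ∑' k, (-x) ^ k * x := (hs.tsum_mul_right x).symm
    have h2 : ∀ k, (-x) ^ k * x = -((-x) ^ (k+1)) := by
      intro k
      rw [pow_succ]
      simp
    rw [h1]
    calc (∑' k, (-x) ^ k * x) = ∑' k, -((-x) ^ (k+1)) := tsum_congr h2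
      _ = -(∑' k, (-x) ^ (k+1)) := tsum_neg
      _ = 1 - N := by rw [hsplit]; abel
  refine ⟨⟨1 + x, N, ?_, ?_⟩, rfl⟩
  · show (1 + x) * N = 1
    rw [add_mul, one_mul, hxN]; abel
  · show N * (1 + x) = 1
    rw [mul_add, mul_one, hNx]; abel

theorem commute_tsum {a : A} {f : ℕ → A} (hf : Summable f) (h : ∀ k, Commute a (f k)) :
    Commute a (∑' k, f k) := by
  show a * (∑' k, f k) = (∑' k, f k) * a
  rw [← hf.tsum_mul_left, ← hf.tsum_mul_right]
  exact tsum_congr fun k => (h k).eq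

/-! ### Power series evaluation at a quasinilpotent element -/

noncomputable def evPS (q : A) (F : PowerSeries ℂ) : A :=
  ∑' k, (PowerSeries.coeff k F) • q ^ k

def SGeo (F : PowerSeries ℂ) : Prop :=
  ∃ C r : ℝ, 0 ≤ C ∧ 0 ≤ r ∧ ∀ k, ‖PowerSeries.coeff k F‖ ≤ C * r ^ k

theorem SGeo.one : SGeo (1 : PowerSeries ℂ) := by
  refine ⟨1, 1, zero_le_one, zero_le_one, fun k => ?_⟩
  rw [PowerSeries.coeff_one]
  split <;> simp

theorem SGeo.mul {F G : PowerSeries ℂ} (hF : SGeo F) (hG : SGeo G) : SGeo (F * G) := by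
  obtain ⟨C, r, hC, hr, hFb⟩ := hF
  obtain ⟨D, s, hD, hs, hGb⟩ := hG
  refine ⟨C * D, 2 * max r s, by positivity, by positivity, fun k => ?_⟩
  rw [PowerSeries.coeff_mul]
  have hmax : (0:ℝ) ≤ max r s := le_max_of_le_left hr
  have hterm : ∀ kl ∈ Finset.HasAntidiagonal.antidiagonal k,
      ‖PowerSeries.coeff kl.1 F * PowerSeries.coeff kl.2 G‖ ≤ (C * D) * (max r s) ^ k := by
    intro kl hkl
    have hkl' : kl.1 + kl.2 = k := Finset.HasAntidiagonal.mem_antidiagonal.mp hkl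
    have e1 : ‖PowerSeries.coeff kl.1 F * PowerSeries.coeff kl.2 G‖
        ≤ (C * r ^ kl.1) * (D * s ^ kl.2) := by
      rw [norm_mul]
      exact mul_le_mul (hFb kl.1) (hGb kl.2) (norm_nonneg _) (by positivity)
    have e2 : (r:ℝ) ^ kl.1 * s ^ kl.2 ≤ (max r s) ^ k := by
      rw [← hkl', pow_add]
      exact mul_le_mul (pow_le_pow_left₀ hr (le_max_left r s) _)
        (pow_le_pow_left₀ hs (le_max_right r s) _) (by positivity) (by positivity)
    calc ‖PowerSeries.coeff kl.1 F * PowerSeries.coeff kl.2 G‖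
        ≤ (C * r ^ kl.1) * (D * s ^ kl.2) := e1
      _ = (C * D) * (r ^ kl.1 * s ^ kl.2) := by ring
      _ ≤ (C * D) * (max r s) ^ k := mul_le_mul_of_nonneg_left e2 (by positivity)
  calc ‖∑ kl ∈ Finset.HasAntidiagonal.antidiagonal k, PowerSeries.coeff kl.1 F * PowerSeries.coeff kl.2 G‖
      ≤ ∑ kl ∈ Finset.HasAntidiagonal.antidiagonal k,
          ‖PowerSeries.coeff kl.1 F * PowerSeries.coeff kl.2 G‖ := norm_sum_le _ _
    _ ≤ ∑ _kl ∈ Finset.HasAntidiagonal.antidiagonal k, (C * D) * (max r s) ^ k :=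
        Finset.sum_le_sum hterm
    _ = ((k:ℝ) + 1) * ((C * D) * (max r s) ^ k) := by
        rw [Finset.sum_const, Finset.Nat.card_antidiagonal, nsmul_eq_mul]; push_cast; ring
    _ ≤ (2:ℝ) ^ k * ((C * D) * (max r s) ^ k) := by
        have hk2 : ((k:ℝ) + 1) ≤ (2:ℝ) ^ k := by
          have := Nat.lt_two_pow_self (n := k)
          exact_mod_cast Nat.succ_le_of_lt this
        have : (0:ℝ) ≤ (C * D) * (max r s) ^ k := by positivity
        nlinarith
    _ = C * D * (2 * max r s) ^ k := by rw [mul_pow]; ring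

theorem SGeo.pow {F : PowerSeries ℂ} (hF : SGeo F) : ∀ m, SGeo (F ^ m)
  | 0 => by rw [pow_zero]; exact SGeo.one
  | (m+1) => by rw [pow_succ]; exact (hF.pow m).mul hF

theorem evPS_mul (q : A) (hq : IsQN q) {F G : PowerSeries ℂ} (hF : SGeo F) (hG : SGeo G) :
    evPS q (F * G) = evPS q F * evPS q G := by
  obtain ⟨C, r, hC, hr, hFb⟩ := hF
  obtain ⟨D, s, hD, hs, hGb⟩ := hG
  have hFs : Summable (fun k => ‖(PowerSeries.coeff k F) • q ^ k‖) :=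
    hq.summable_norm_smul hC hr hFb
  have hGs : Summable (fun k => ‖(PowerSeries.coeff k G) • q ^ k‖) :=
    hq.summable_norm_smul hD hs hGb
  rw [evPS, evPS, evPS, tsum_mul_tsum_eq_tsum_sum_antidiagonal_of_summable_norm hFs hGs]
  refine tsum_congr fun k => ?_
  rw [PowerSeries.coeff_mul, Finset.sum_smul]
  refine Finset.sum_congr rfl fun kl hkl => ?_
  have hkl' : kl.1 + kl.2 = k := Finset.HasAntidiagonal.mem_antidiagonal.mp hkl
  rw [smul_mul_assoc, mul_smul_comm, smul_smul, ← pow_add, hkl']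

theorem evPS_pow (q : A) (hq : IsQN q) {F : PowerSeries ℂ} (hF : SGeo F) :
    ∀ m, evPS q (F ^ m) = (evPS q F) ^ m
  | 0 => by
      rw [pow_zero, pow_zero, evPS]
      rw [tsum_eq_single 0 (by
        intro k hk
        rw [PowerSeries.coeff_one, if_neg hk, zero_smul])]
      rw [PowerSeries.coeff_one, if_pos rfl, pow_zero, one_smul]
  | (m+1) => by
      rw [pow_succ, pow_succ, evPS_mul q hq (hF.pow m) hF, evPS_pow q hq hF m]

theorem evPS_one_add_X (q : A) : evPS q (1 + PowerSeries.X) = 1 + q := by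
  rw [evPS]
  rw [tsum_eq_sum (s := Finset.range 2) (by
    intro k hk
    have h1 : k ≠ 0 := by intro h; apply hk; rw [h]; exact Finset.mem_range.mpr (by norm_num)
    have h2 : k ≠ 1 := by intro h; apply hk; rw [h]; exact Finset.mem_range.mpr (by norm_num)
    rw [map_add, PowerSeries.coeff_one, PowerSeries.coeff_X, if_neg h1, if_neg h2, add_zero,
      zero_smul])]
  rw [Finset.sum_range_succ, Finset.sum_range_one]
  simp [PowerSeries.coeff_one, PowerSeries.coeff_X]

/-! ### Quasinilpotency from spectral radius -/

theorem isQN_of_spectralRadius_eq_zero {q : A} (h : spectralRadius ℂ q = 0) : IsQN q := by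
  intro ε hε
  have hten := spectrum.pow_nnnorm_pow_one_div_tendsto_nhds_spectralRadius q
  rw [h] at hten
  have hev : ∀ᶠ k : ℕ in atTop, ((‖q ^ k‖₊ : ENNReal) ^ (1/(k:ℝ))) < ENNReal.ofReal ε :=
    hten.eventually_lt_const (by simpa using ENNReal.ofReal_pos.mpr hε)
  filter_upwards [hev, eventually_ge_atTop 1] with k hk hk1
  have hkR : (0:ℝ) < (k:ℝ) := by exact_mod_cast hk1
  have h1 : (((‖q ^ k‖₊ : ENNReal) ^ (1/(k:ℝ))) ^ (k:ℝ)) ≤ (ENNReal.ofReal ε) ^ (k:ℝ) :=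
    ENNReal.rpow_le_rpow hk.le hkR.le
  rw [← ENNReal.rpow_mul, one_div, inv_mul_cancel₀ (ne_of_gt hkR), ENNReal.rpow_one] at h1
  rw [ENNReal.ofReal_rpow_of_pos hε, Real.rpow_natCast] at h1
  rw [ENNReal.ofReal, ENNReal.coe_le_coe] at h1
  have h3 := NNReal.coe_le_coe.mpr h1
  rwa [coe_nnnorm, Real.coe_toNNReal _ (by positivity)] at h3

/-! ### The binomial series -/

noncomputable def bc (n : ℕ) : ℕ → ℂ :=
  fun k => (∏ j ∈ Finset.range k, ((n:ℂ)⁻¹ - j)) / (k.factorial : ℂ)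

theorem bc_zero (n : ℕ) : bc n 0 = 1 := by simp [bc]

theorem bc_succ (n : ℕ) (k : ℕ) : bc n (k+1) * ((k:ℂ)+1) = bc n k * ((n:ℂ)⁻¹ - (k:ℂ)) := by
  have hk1 : ((k:ℂ)+1) ≠ 0 := Nat.cast_add_one_ne_zero k
  have hf : ((k.factorial : ℂ)) ≠ 0 := Nat.cast_ne_zero.mpr k.factorial_ne_zero
  simp only [bc, Finset.prod_range_succ, Nat.factorial_succ]
  push_cast
  field_simp

theorem bc_norm {n : ℕ} (hn : 2 ≤ n) (k : ℕ) : ‖bc n k‖ ≤ 1 := by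
  have hf : (0:ℝ) < (k.factorial : ℝ) := by exact_mod_cast k.factorial_pos
  simp only [bc]
  rw [norm_div, norm_prod]
  have hnf : ‖((k.factorial : ℕ) : ℂ)‖ = (k.factorial : ℝ) := by
    rw [Complex.norm_natCast]
  rw [hnf, div_le_one hf]
  calc ∏ j ∈ Finset.range k, ‖(n:ℂ)⁻¹ - (j:ℂ)‖
      ≤ ∏ j ∈ Finset.range k, ((j:ℝ) + 1) := by
        apply Finset.prod_le_prod (fun j _ => norm_nonneg _)
        intro j _
        calc ‖(n:ℂ)⁻¹ - (j:ℂ)‖ ≤ ‖(n:ℂ)⁻¹‖ + ‖(j:ℂ)‖ := norm_sub_le _ _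
          _ ≤ (j:ℝ) + 1 := by
              have h1 : ‖(n:ℂ)⁻¹‖ ≤ 1 := by
                rw [norm_inv, Complex.norm_natCast]
                have h2 : (1:ℝ) ≤ (n:ℝ) := by exact_mod_cast (by omega : 1 ≤ n)
                exact inv_le_one_of_one_le₀ h2
              rw [Complex.norm_natCast]
              linarith
    _ = (k.factorial : ℝ) := by
        have h1 := Finset.prod_range_add_one_eq_factorial k
        have h2 : ((∏ x ∈ Finset.range k, (x+1) : ℕ) : ℝ) = (k.factorial : ℝ) := by
          exact_mod_cast congrArg (Nat.cast : ℕ → ℝ) h1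
        rw [← h2, Nat.cast_prod]
        push_cast
        rfl

noncomputable def Bps (n : ℕ) : PowerSeries ℂ := PowerSeries.mk (bc n)

theorem SGeo_B {n : ℕ} (hn : 2 ≤ n) : SGeo (Bps n) :=
  ⟨1, 1, zero_le_one, zero_le_one, fun k => by
    simpa [Bps, PowerSeries.coeff_mk] using bc_norm hn k⟩

theorem ode1 {n : ℕ} (hn : 2 ≤ n) :
    (1 + PowerSeries.X) * (PowerSeries.derivative ℂ (Bps n)) = (n:ℂ)⁻¹ • (Bps n) := by
  ext k
  rw [add_mul, one_mul, mul_comm PowerSeries.X]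
  rw [map_add, map_smul]
  cases k with
  | zero =>
      rw [PowerSeries.coeff_zero_mul_X, PowerSeries.coeff_derivative]
      simp only [Bps, PowerSeries.coeff_mk, smul_eq_mul]
      have h := bc_succ n 0
      rw [bc_zero] at h
      rw [bc_zero]
      push_cast at h ⊢
      linear_combination h
  | succ j =>
      rw [PowerSeries.coeff_succ_mul_X]
      rw [PowerSeries.coeff_derivative, PowerSeries.coeff_derivative]
      simp only [Bps, PowerSeries.coeff_mk, smul_eq_mul]
      have h := bc_succ n (j+1)
      push_cast at h ⊢
      linear_combination h

theorem ode_pow {n : ℕ} (hn : 2 ≤ n) (m : ℕ) :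
    (1 + PowerSeries.X) * (PowerSeries.derivative ℂ ((Bps n) ^ m))
      = ((m : ℂ) * (n:ℂ)⁻¹) • (Bps n) ^ m := by
  induction m with
  | zero => simp
  | succ m ih =>
      rw [pow_succ, Derivation.leibniz, smul_eq_mul, smul_eq_mul, mul_add]
      have e1 : (1 + PowerSeries.X) * ((Bps n) ^ m * PowerSeries.derivative ℂ (Bps n))
          = (n:ℂ)⁻¹ • ((Bps n) ^ m * (Bps n)) := by
        rw [mul_left_comm, ode1 hn, mul_smul_comm]
      have e2 : (1 + PowerSeries.X) * ((Bps n) * PowerSeries.derivative ℂ ((Bps n) ^ m))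
          = ((m:ℂ) * (n:ℂ)⁻¹) • ((Bps n) ^ m * (Bps n)) := by
        rw [mul_left_comm, ih, mul_smul_comm, mul_comm (Bps n)]
      rw [e1, e2, ← add_smul]
      congr 1
      push_cast
      ring

theorem Bn_eq {n : ℕ} (hn : 2 ≤ n) : (Bps n) ^ n = 1 + PowerSeries.X := by
  have hn0 : ((n:ℂ)) ≠ 0 := Nat.cast_ne_zero.mpr (by omega)
  have h1 : (1 + PowerSeries.X) * (PowerSeries.derivative ℂ ((Bps n) ^ n)) = (Bps n) ^ n := by
    have h := ode_pow hn n
    rw [mul_inv_cancel₀ hn0, one_smul] at h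
    exact h
  have hc0 : PowerSeries.coeff 0 ((Bps n) ^ n) = 1 := by
    simp only [PowerSeries.coeff_zero_eq_constantCoeff, map_pow]
    simp [Bps, PowerSeries.constantCoeff_mk, bc_zero]
  have hrec0 : PowerSeries.coeff 1 ((Bps n) ^ n) = 1 := by
    have h2 := congrArg (PowerSeries.coeff 0) h1
    rw [add_mul, one_mul, mul_comm PowerSeries.X, map_add, PowerSeries.coeff_zero_mul_X,
      PowerSeries.coeff_derivative, add_zero, hc0] at h2
    push_cast at h2
    linear_combination h2
  have hstep : ∀ j : ℕ, PowerSeries.coeff (j+1+1) ((Bps n) ^ n) * (((j:ℂ)+1)+1)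
      + PowerSeries.coeff (j+1) ((Bps n) ^ n) * ((j:ℂ)+1)
      = PowerSeries.coeff (j+1) ((Bps n) ^ n) := by
    intro j
    have h2 := congrArg (PowerSeries.coeff (j+1)) h1
    rw [add_mul, one_mul, mul_comm PowerSeries.X, map_add, PowerSeries.coeff_succ_mul_X,
      PowerSeries.coeff_derivative, PowerSeries.coeff_derivative] at h2
    push_cast at h2 ⊢
    linear_combination h2
  have hzero : ∀ j : ℕ, PowerSeries.coeff (j+1+1) ((Bps n) ^ n) = 0 := by
    intro j
    induction j with
    | zero =>
        have h2 := hstep 0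
        rw [hrec0] at h2
        have h3 : PowerSeries.coeff (0+1+1) ((Bps n) ^ n) * 2 = 0 := by
          push_cast at h2 ⊢
          linear_combination h2
        rcases mul_eq_zero.mp h3 with h4 | h4
        · exact h4
        · norm_num at h4
    | succ j ih =>
        have h2 := hstep (j+1)
        rw [ih] at h2
        have h3 : PowerSeries.coeff (j+1+1+1) ((Bps n) ^ n) * ((j:ℂ)+1+1+1) = 0 := by
          push_cast at h2 ⊢
          linear_combination h2
        have h4 : ((j:ℂ)+1+1+1) ≠ 0 := by
          have h5 : (((j+3 : ℕ)):ℂ) ≠ 0 := Nat.cast_ne_zero.mpr (by omega)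
          intro hx
          apply h5
          push_cast
          linear_combination hx
        rcases mul_eq_zero.mp h3 with h5 | h5
        · exact h5
        · exact absurd h5 h4
  ext k
  match k with
  | 0 =>
    rw [hc0]
    simp
  | 1 =>
    rw [hrec0]
    simp
  | (j+2) =>
    have := hzero j
    rw [show j+1+1 = j+2 from rfl] at this
    rw [this]
    simp [PowerSeries.coeff_one, PowerSeries.coeff_X]

/-! ### Polynomial decomposition -/

theorem poly_decomp {p : ℂ[X]} {n : ℕ} {lam : ℂ} (hdeg : p.natDegree = n) (hn : 2 ≤ n)
    (hdvd : (X - C lam) ^ (n-1) ∣ derivative p) :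
    ∃ a b : ℂ, a ≠ 0 ∧ p = C a * (X - C lam) ^ n + C b := by
  have hn0 : ((n:ℂ)) ≠ 0 := Nat.cast_ne_zero.mpr (by omega)
  obtain ⟨g, hg⟩ := hdvd
  have hp'ne : derivative p ≠ 0 := by
    intro h0
    have h1 := eq_C_of_derivative_eq_zero h0
    rw [h1] at hdeg
    rw [natDegree_C] at hdeg
    omega
  have hgne : g ≠ 0 := by
    rintro rfl
    rw [mul_zero] at hg
    exact hp'ne hg
  have hXlam : ((X - C lam) ^ (n-1) : ℂ[X]) ≠ 0 := pow_ne_zero _ (X_sub_C_ne_zero lam)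
  have hdeg' : (derivative p).natDegree ≤ n - 1 := hdeg ▸ natDegree_derivative_le p
  have hdegmul : (derivative p).natDegree = (n-1) + g.natDegree := by
    rw [hg, natDegree_mul hXlam hgne, natDegree_pow, natDegree_X_sub_C, mul_one]
  have hgdeg : g.natDegree = 0 := by omega
  have hgC : g = C (g.coeff 0) := eq_C_of_natDegree_eq_zero hgdeg
  set c := g.coeff 0 with hcdef
  have hcne : c ≠ 0 := by
    intro h
    rw [hgC, h, map_zero] at hgne
    exact hgne rfl
  refine ⟨c / n, (p - C (c/n) * (X - C lam)^n).coeff 0, div_ne_zero hcne hn0, ?_⟩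
  have hder : derivative (p - C (c/n) * (X - C lam)^n) = 0 := by
    rw [derivative_sub, derivative_mul, derivative_C, zero_mul, zero_add, derivative_pow,
      derivative_X_sub_C, mul_one, ← mul_assoc, ← map_mul, div_mul_cancel₀ _ hn0, hg, hgC]
    ring
  have hb := eq_C_of_derivative_eq_zero hder
  have : p - C (c/n) * (X - C lam)^n = C ((p - C (c/n) * (X - C lam)^n).coeff 0) := hb
  linear_combination this

end StmtAux

open StmtAux Filter Finset in
theorem stmt_2 {E : Type*} [NormedAddCommGroup E] [NormedSpace ℂ E] [CompleteSpace E]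
    [TopologicalSpace.SeparableSpace E] (hdim : ¬ FiniteDimensional ℂ E)
    (T : E →L[ℂ] E) (hT : spectrum ℂ T = {0}) (p : Polynomial ℂ) (n : ℕ)
    (hdeg : p.natDegree = n) (hn : 2 ≤ n)
    (hroot : ∃ lam : ℂ, lam ≠ 0 ∧ (X - C lam) ^ (n - 1) ∣ p.derivative ∧
      ¬ (X - C lam) ^ n ∣ p.derivative) :
    HasNontrivialClosedInvariantSubspace T ↔
      HasNontrivialClosedInvariantSubspace (Polynomial.aeval T p) := by
  classical
  obtain ⟨lam, hlam, hdvd, -⟩ := hroot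
  obtain ⟨a, b, ha, hp⟩ := poly_decomp hdeg hn hdvd
  constructor
  · rintro ⟨M, hMc, hM0, hMT, hMi⟩
    refine ⟨M, hMc, hM0, hMT, fun x hx => ?_⟩
    have hpow : ∀ i, ∀ y ∈ M, (T ^ i) y ∈ M := by
      intro i
      induction i with
      | zero => intro y hy; simpa using hy
      | succ i ih =>
          intro y hy
          rw [pow_succ, ContinuousLinearMap.mul_apply]
          exact ih _ (hMi y hy)
    rw [Polynomial.aeval_eq_sum_range, ContinuousLinearMap.sum_apply]
    refine Submodule.sum_mem M fun i _ => ?_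
    rw [ContinuousLinearMap.smul_apply]
    exact M.smul_mem _ (hpow i x hx)
  · rintro ⟨M, hMc, hM0, hMT, hMi⟩
    refine ⟨M, hMc, hM0, hMT, fun x hx => ?_⟩
    -- quasinilpotency of T
    have hqnT : IsQN T := isQN_of_spectralRadius_eq_zero (by simp [spectralRadius, hT])
    set V : E →L[ℂ] E := 1 - lam⁻¹ • T with hV
    set Q : E →L[ℂ] E := V ^ n - 1 with hQdef
    -- algebraic expression of `Q` via `aeval T p`
    have haev : Polynomial.aeval T p = a • (T - lam • 1) ^ n + b • (1 : E →L[ℂ] E) := by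
      rw [hp, map_add, map_mul, Polynomial.aeval_C, Polynomial.aeval_C, map_pow, map_sub,
        Polynomial.aeval_X, Polynomial.aeval_C]
      simp only [Algebra.algebraMap_eq_smul_one]
      rw [smul_mul_assoc, one_mul]
    have hZn : (T - lam • (1 : E →L[ℂ] E)) ^ n = a⁻¹ • (Polynomial.aeval T p - b • 1) := by
      rw [haev, add_sub_cancel_right, smul_smul, inv_mul_cancel₀ ha, one_smul]
    have hVeq : V = (-lam⁻¹) • (T - lam • (1 : E →L[ℂ] E)) := by
      rw [hV, smul_sub, smul_smul, show -lam⁻¹ * lam = -1 by rw [neg_mul, inv_mul_cancel₀ hlam],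
        neg_smul lam⁻¹ T, neg_smul (1:ℂ), one_smul, sub_neg_eq_add]
      abel
    have hQS : Q = (((-lam⁻¹)^n) * a⁻¹) • (Polynomial.aeval T p)
        + ((((-lam⁻¹)^n) * a⁻¹) * (-b) - 1) • (1 : E →L[ℂ] E) := by
      rw [hQdef, hVeq, _root_.smul_pow, hZn, smul_smul, smul_sub, smul_smul, sub_smul, one_smul,
        mul_neg, neg_smul]
      abel
    have hQM : ∀ y ∈ M, Q y ∈ M := by
      intro y hy
      rw [hQS, ContinuousLinearMap.add_apply, ContinuousLinearMap.smul_apply,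
        ContinuousLinearMap.smul_apply, ContinuousLinearMap.one_apply]
      exact M.add_mem (M.smul_mem _ (hMi y hy)) (M.smul_mem _ hy)
    -- quasinilpotency of Q
    have hV1 : V - 1 = (-lam⁻¹) • T := by rw [hV, neg_smul]; abel
    have hqnV1 : IsQN (V - 1) := by rw [hV1]; exact hqnT.smul _
    have hcomV1sum : Commute (V - 1) (∑ i ∈ Finset.range n, V ^ i) :=
      Commute.sum_right _ _ _
        (fun i _ => (((Commute.refl V).sub_left (Commute.one_left V)).pow_right i))
    have hgeom1 := (Commute.one_right V).geom_sum₂_mul n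
    simp only [one_pow, mul_one] at hgeom1
    have hqnQ : IsQN Q := by
      have h1 : IsQN ((V - 1) * (∑ i ∈ Finset.range n, V ^ i)) := hqnV1.mul_commute hcomV1sum
      rw [hcomV1sum.eq] at h1
      rw [hQdef, ← hgeom1]
      exact h1
    -- the binomial series of Q
    have hbcb : ∀ k, ‖bc n k‖ ≤ 1 * (1:ℝ) ^ k := fun k => by simpa using bc_norm hn k
    have hsumWn : Summable (fun k => ‖bc n k • Q ^ k‖) :=
      hqnQ.summable_norm_smul zero_le_one zero_le_one hbcb
    have hsumW : Summable (fun k => bc n k • Q ^ k) := hsumWn.of_norm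
    set W : E →L[ℂ] E := evPS Q (Bps n) with hWdef
    have hWs : W = ∑' k, bc n k • Q ^ k := by
      rw [hWdef, evPS]
      simp only [Bps, PowerSeries.coeff_mk]
    have hWn : W ^ n = 1 + Q := by
      rw [hWdef, ← evPS_pow Q hqnQ (SGeo_B hn), Bn_eq hn, evPS_one_add_X]
    -- commutation facts
    have hTS : Commute T (Polynomial.aeval T p) := by
      show T * _ = _ * T
      calc T * Polynomial.aeval T p = Polynomial.aeval T (X * p) := by
            rw [map_mul, Polynomial.aeval_X]
        _ = Polynomial.aeval T (p * X) := by rw [mul_comm]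
        _ = Polynomial.aeval T p * T := by rw [map_mul, Polynomial.aeval_X]
    have hcomTQ : Commute T Q := by
      rw [hQS]
      exact (hTS.smul_right _).add_right ((Commute.one_right T).smul_right _)
    have hcomTW : Commute T W := by
      rw [hWs]
      exact commute_tsum hsumW (fun k => (hcomTQ.pow_right k).smul_right _)
    have hcomVW : Commute V W := by
      rw [hV]
      exact (Commute.one_left W).sub_left (hcomTW.smul_left _)
    -- W - 1 = Q * G is quasinilpotent
    have hbcb' : ∀ k, ‖bc n (k+1)‖ ≤ 1 * (1:ℝ) ^ k := fun k => by simpa using bc_norm hn (k+1)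
    have hsumGn : Summable (fun k => ‖bc n (k+1) • Q ^ k‖) :=
      hqnQ.summable_norm_smul zero_le_one zero_le_one hbcb'
    have hsumG : Summable (fun k => bc n (k+1) • Q ^ k) := hsumGn.of_norm
    set G : E →L[ℂ] E := ∑' k, bc n (k+1) • Q ^ k with hGdef
    have hW1 : W - 1 = Q * G := by
      have h1 : W = 1 + ∑' k, bc n (k+1) • Q ^ (k+1) := by
        rw [hWs, Summable.tsum_eq_zero_add hsumW, bc_zero, pow_zero, one_smul]
      have h2 : Q * G = ∑' k, bc n (k+1) • Q ^ (k+1) := by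
        rw [hGdef, ← hsumG.tsum_mul_left Q]
        exact tsum_congr fun k => by rw [mul_smul_comm, ← pow_succ']
      rw [h1, h2]
      abel
    have hcomQG : Commute Q G :=
      commute_tsum hsumG (fun k => ((Commute.refl Q).pow_right k).smul_right _)
    have hqnW1 : IsQN (W - 1) := by rw [hW1]; exact hqnQ.mul_commute hcomQG
    -- D := W - V is quasinilpotent
    set D : E →L[ℂ] E := W - V with hDdef
    have hcomW1V1 : Commute (W - 1) (-(V - 1)) :=
      (((hcomVW.symm.sub_right (Commute.one_right W)).sub_left
        (Commute.one_left _))).neg_right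
    have hqnD : IsQN D := by
      have h0 : D = (W - 1) + (-(V - 1)) := by rw [hDdef]; abel
      rw [h0]
      exact hqnW1.add hqnV1.neg hcomW1V1
    have hWnVn : W ^ n = V ^ n := by rw [hWn, hQdef]; abel
    have hcomWV : Commute W V := hcomVW.symm
    have hcomDV : Commute D V := by rw [hDdef]; exact hcomWV.sub_left (Commute.refl V)
    have hcomDW : Commute D W := by rw [hDdef]; exact (Commute.refl W).sub_left hcomVW
    set U : E →L[ℂ] E := ∑ i ∈ Finset.range n, W ^ i * V ^ (n - 1 - i) with hUdef
    have hUD : U * D = 0 := by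
      rw [hUdef, hDdef, hcomWV.geom_sum₂_mul n, hWnVn, sub_self]
    set Z : E →L[ℂ] E := ∑ i ∈ Finset.range n,
      ((∑ j ∈ Finset.range i, W ^ j * V ^ (i - 1 - j)) * V ^ (n - 1 - i)) with hZdef
    have hterm : ∀ i ∈ Finset.range n, W ^ i * V ^ (n - 1 - i)
        = V ^ (n-1) + ((∑ j ∈ Finset.range i, W ^ j * V ^ (i - 1 - j)) * V ^ (n - 1 - i)) * D := by
      intro i hi
      have hin : i < n := Finset.mem_range.mp hi
      have hgi := hcomWV.geom_sum₂_mul i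
      have hWi : W ^ i = V ^ i + (∑ j ∈ Finset.range i, W ^ j * V ^ (i - 1 - j)) * D := by
        rw [hDdef, hgi]
        abel
      rw [hWi, add_mul]
      congr 1
      · rw [← pow_add]
        congr 1
        omega
      · rw [mul_assoc, mul_assoc, (hcomDV.pow_right _).eq]
    have hUZ : U = (n:ℂ) • V ^ (n-1) + Z * D := by
      rw [hUdef, Finset.sum_congr rfl hterm, Finset.sum_add_distrib, Finset.sum_const,
        Finset.card_range, hZdef, Finset.sum_mul]
      congr 1
      rw [← Nat.cast_smul_eq_nsmul ℂ]
    -- invertibility of U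
    have hVunit : IsUnit V := by
      have h1 : V = 1 + (-(lam⁻¹ • T)) := by rw [hV]; abel
      rw [h1]
      exact ((hqnT.smul lam⁻¹).neg).isUnit_one_add
    have hn0 : ((n:ℂ)) ≠ 0 := Nat.cast_ne_zero.mpr (by omega)
    have hNVunit : IsUnit ((n:ℂ) • V ^ (n-1)) := by
      have h2 : IsUnit ((n:ℂ) • (1 : E →L[ℂ] E)) := by
        refine ⟨⟨(n:ℂ) • 1, (n:ℂ)⁻¹ • 1, ?_, ?_⟩, rfl⟩
        · rw [smul_mul_assoc, one_mul, smul_smul, mul_inv_cancel₀ hn0, one_smul]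
        · rw [smul_mul_assoc, one_mul, smul_smul, inv_mul_cancel₀ hn0, one_smul]
      have h1 : ((n:ℂ) • V ^ (n-1)) = ((n:ℂ) • 1) * V ^ (n-1) := by
        rw [smul_mul_assoc, one_mul]
      rw [h1]
      exact h2.mul (hVunit.pow _)
    obtain ⟨u, hu⟩ := hNVunit
    have hcomDu : Commute D (↑u : E →L[ℂ] E) := by
      rw [hu]
      exact (hcomDV.pow_right _).smul_right _
    have hcomDui : Commute D (↑u⁻¹ : E →L[ℂ] E) := hcomDu.units_inv_right
    have hcomDZ : Commute D Z := by
      rw [hZdef]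
      refine Commute.sum_right _ _ _ (fun i _ => ?_)
      exact (Commute.sum_right _ _ _
        (fun j _ => (hcomDW.pow_right _).mul_right (hcomDV.pow_right _))).mul_right
        (hcomDV.pow_right _)
    have hcomDuZ : Commute D ((↑u⁻¹ : E →L[ℂ] E) * Z) := hcomDui.mul_right hcomDZ
    have hqnuZD : IsQN ((↑u⁻¹ : E →L[ℂ] E) * Z * D) := by
      have h1 : IsQN (D * ((↑u⁻¹ : E →L[ℂ] E) * Z)) := hqnD.mul_commute hcomDuZ
      rw [← hcomDuZ.eq]
      exact h1
    have hUunit : IsUnit U := by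
      have e : (↑u : E →L[ℂ] E) * ((↑u⁻¹ : E →L[ℂ] E) * Z * D) = Z * D := by
        rw [mul_assoc ((↑u⁻¹ : E →L[ℂ] E)) Z D, Units.mul_inv_cancel_left]
      have hfact : U = ↑u * (1 + (↑u⁻¹ : E →L[ℂ] E) * Z * D) := by
        rw [mul_add, mul_one, e, hu, hUZ]
      rw [hfact]
      exact u.isUnit.mul hqnuZD.isUnit_one_add
    obtain ⟨v, hv⟩ := hUunit
    have hD0 : D = 0 := (Units.mul_right_eq_zero v).mp (by rw [hv]; exact hUD)
    have hWV : W = V := sub_eq_zero.mp hD0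
    -- T in terms of W
    have hTlam : T = lam • (1 : E →L[ℂ] E) - lam • W := by
      have h1 : lam⁻¹ • T = 1 - W := by rw [hWV, hV]; abel
      have h2 : T = lam • (lam⁻¹ • T) := by
        rw [smul_smul, mul_inv_cancel₀ hlam, one_smul]
      rw [h2, h1, smul_sub]
    -- membership
    have hQk : ∀ k, ∀ y ∈ M, (Q ^ k) y ∈ M := by
      intro k
      induction k with
      | zero => intro y hy; simpa using hy
      | succ k ih =>
          intro y hy
          rw [pow_succ, ContinuousLinearMap.mul_apply]
          exact ih _ (hQM y hy)
    have hWx : W x ∈ M := by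
      have hhs : HasSum (fun k => bc n k • Q ^ k) W := by
        rw [hWs]
        exact hsumW.hasSum
      have hhx := hhs.mapL (ContinuousLinearMap.apply ℂ E x)
      simp only [ContinuousLinearMap.apply_apply] at hhx
      refine hMc.mem_of_tendsto hhx.tendsto_sum_nat (Filter.Eventually.of_forall fun m => ?_)
      refine Submodule.sum_mem M fun k _ => ?_
      rw [ContinuousLinearMap.smul_apply]
      exact M.smul_mem _ (hQk k x hx)
    have hfinal : T x = lam • x - lam • (W x) := by
      rw [hTlam, ContinuousLinearMap.sub_apply, ContinuousLinearMap.smul_apply,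
        ContinuousLinearMap.smul_apply, ContinuousLinearMap.one_apply]
    rw [hfinal]
    exact M.sub_mem (M.smul_mem _ hx) (M.smul_mem _ hWx)
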